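/- arXiv:1405.3792 — 9 statements merged into one kernel-verified Lean document; each statement's English description precedes it below -/
import Mathlib

section
/- Let A, B be basic models, f : A → B a function, β < κ an ordinal, and F ⊆ (f]_β a set of functions each of which is α-monotonic for every α < κ. Then ⊔_β F (computed pointwise) is α-monotonic for every α < κ. -/
/-- A *basic model*: a complete lattice `L` equipped with preorders `sq α` (written `⊑_α`)
for each ordinal `α < κ`, together with the relative least-upper-bound operation `lub α X`
(written `⊔_α X`), satisfying the four basic-model axioms. -/
structure BasicModel (L : Type*) [CompleteLattice L] (κ : Ordinal) where
  sq : Ordinal → L → L → Prop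
  lub : Ordinal → Set L → L
  sq_refl : ∀ {α : Ordinal}, α < κ → ∀ x, sq α x x
  sq_trans : ∀ {α : Ordinal}, α < κ → ∀ {x y z : L}, sq α x y → sq α y z → sq α x z
  ax1 : ∀ {α β : Ordinal}, α < β → β < κ → ∀ {x y : L}, sq β x y → sq α x y ∧ sq α y x
  ax2 : ∀ {x y : L}, (∀ α, α < κ → sq α x y ∧ sq α y x) → x = y
  ax3_ub : ∀ {α : Ordinal}, α < κ → ∀ (x : L) (X : Set L),
      X ⊆ {y | ∀ β < α, sq β x y ∧ sq β y x} → ∀ z ∈ X, sq α z (lub α X)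
  ax3_least : ∀ {α : Ordinal}, α < κ → ∀ (x : L) (X : Set L),
      X ⊆ {y | ∀ β < α, sq β x y ∧ sq β y x} →
      ∀ z : L, (∀ β < α, sq β x z ∧ sq β z x) → (∀ w ∈ X, sq α w z) →
        sq α (lub α X) z ∧ lub α X ≤ z
  ax4 : ∀ {α : Ordinal}, α < κ → ∀ (S : Set (L × L)), (∀ p ∈ S, sq α p.1 p.2) →
      sq α (sSup (Prod.fst '' S)) (sSup (Prod.snd '' S))

namespace BasicModel

variable {L : Type*} [CompleteLattice L] {κ : Ordinal}

/-- `x =_α y`. -/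
def eqAt (B : BasicModel L κ) (α : Ordinal) (x y : L) : Prop :=
  B.sq α x y ∧ B.sq α y x

/-- The set `(x]_α = {y | ∀ β < α, x =_β y}`. -/
def cone (B : BasicModel L κ) (α : Ordinal) (x : L) : Set L :=
  {y | ∀ β < α, B.eqAt β x y}

/-- The α-restriction `x|_α = ⊔_α {x}`. -/
def restrict (B : BasicModel L κ) (α : Ordinal) (x : L) : L :=
  B.lub α {x}

/-- `x ⊏_α y`: `x ⊑_α y` but not `x =_α y`. -/
def ltAt (B : BasicModel L κ) (α : Ordinal) (x y : L) : Prop :=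
  B.sq α x y ∧ ¬ B.eqAt α x y

/-- The global relation `⊑`: `x ⊑ y` iff `x = y` or `x ⊏_α y` for some `α < κ`. -/
def sqle (B : BasicModel L κ) (x y : L) : Prop :=
  x = y ∨ ∃ α < κ, B.ltAt α x y

/-- `g : A → B` is α-monotonic. -/
def MonotonicAt {A B : Type*} [CompleteLattice A] [CompleteLattice B]
    (BA : BasicModel A κ) (BB : BasicModel B κ) (α : Ordinal) (g : A → B) : Prop :=
  ∀ x y : A, BA.sq α x y → BB.sq α (g x) (g y)

end BasicModel

open BasicModel in
/-- if `F ⊆ (f]_β` is a set of functions that are α-monotonic for all `α < κ`,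
then the pointwise `⊔_β F` is α-monotonic for all `α < κ`. -/
theorem stmt_2 {A B : Type*} [CompleteLattice A] [CompleteLattice B] {κ : Ordinal}
    (BA : BasicModel A κ) (BB : BasicModel B κ) {β : Ordinal} (hβ : β < κ)
    (f : A → B) (F : Set (A → B))
    (hmono : ∀ g ∈ F, ∀ α < κ, MonotonicAt BA BB α g)
    (hcone : ∀ g ∈ F, ∀ x : A, ∀ γ < β, BB.eqAt γ (f x) (g x)) :
    ∀ α < κ, MonotonicAt BA BB α (fun x => BB.lub β ((fun g => g x) '' F)) := by
  intro α hα x y hxy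
  rcases F.eq_empty_or_nonempty with rfl | ⟨g₀, hg₀⟩
  · simp only [Set.image_empty]
    exact BB.sq_refl hα _
  · simp only
    set Fx := (fun g => g x) '' F with hFxdef
    set Fy := (fun g => g y) '' F with hFydef
    have hsubx : Fx ⊆ {z | ∀ γ < β, BB.sq γ (f x) z ∧ BB.sq γ z (f x)} := by
      rintro _ ⟨g, hg, rfl⟩ γ hγ; exact hcone g hg x γ hγ
    have hsuby : Fy ⊆ {z | ∀ γ < β, BB.sq γ (f y) z ∧ BB.sq γ z (f y)} := by
      rintro _ ⟨g, hg, rfl⟩ γ hγ; exact hcone g hg y γ hγ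
    have hub_x : ∀ g ∈ F, BB.sq β (g x) (BB.lub β Fx) := fun g hg =>
      BB.ax3_ub hβ (f x) Fx hsubx _ ⟨g, hg, rfl⟩
    have hub_y : ∀ g ∈ F, BB.sq β (g y) (BB.lub β Fy) := fun g hg =>
      BB.ax3_ub hβ (f y) Fy hsuby _ ⟨g, hg, rfl⟩
    rcases lt_trichotomy α β with h | rfl | h
    · -- case α < β
      have p1 : BB.sq α (BB.lub β Fx) (g₀ x) := (BB.ax1 h hβ (hub_x g₀ hg₀)).2
      have p2 : BB.sq α (g₀ x) (g₀ y) := hmono g₀ hg₀ α hα x y hxy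
      have p3 : BB.sq α (g₀ y) (BB.lub β Fy) := (BB.ax1 h hβ (hub_y g₀ hg₀)).1
      exact BB.sq_trans hα p1 (BB.sq_trans hα p2 p3)
    · -- case α = α
      have hz : ∀ γ < α, BB.sq γ (f x) (BB.lub α Fy) ∧ BB.sq γ (BB.lub α Fy) (f x) := by
        intro γ hγ
        have hγκ : γ < κ := hγ.trans hβ
        have e1 := hcone g₀ hg₀ x γ hγ
        have e2 := BB.ax1 hγ hβ (hmono g₀ hg₀ α hβ x y hxy)
        have e3 := BB.ax1 hγ hβ (hub_y g₀ hg₀)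
        exact ⟨BB.sq_trans hγκ e1.1 (BB.sq_trans hγκ e2.1 e3.1),
               BB.sq_trans hγκ e3.2 (BB.sq_trans hγκ e2.2 e1.2)⟩
      have hw : ∀ w ∈ Fx, BB.sq α w (BB.lub α Fy) := by
        rintro _ ⟨g, hg, rfl⟩
        exact BB.sq_trans hβ (hmono g hg α hβ x y hxy) (hub_y g hg)
      exact (BB.ax3_least hβ (f x) Fx hsubx (BB.lub α Fy) hz hw).1
    · -- case β < α
      have hgxy : ∀ g ∈ F, ∀ γ ≤ β, BB.sq γ (g x) (g y) ∧ BB.sq γ (g y) (g x) := by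
        intro g hg γ hγ
        have hγκ : γ < κ := lt_of_le_of_lt hγ hβ
        have e := BA.ax1 (lt_of_le_of_lt hγ h) hα hxy
        exact ⟨hmono g hg γ hγκ x y e.1, hmono g hg γ hγκ y x e.2⟩
      have hz : ∀ γ < β, BB.sq γ (f x) (BB.lub β Fy) ∧ BB.sq γ (BB.lub β Fy) (f x) := by
        intro γ hγ
        have hγκ : γ < κ := hγ.trans hβ
        have e1 := hcone g₀ hg₀ x γ hγ
        have e2 := hgxy g₀ hg₀ γ hγ.le
        have e3 := BB.ax1 hγ hβ (hub_y g₀ hg₀)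
        exact ⟨BB.sq_trans hγκ e1.1 (BB.sq_trans hγκ e2.1 e3.1),
               BB.sq_trans hγκ e3.2 (BB.sq_trans hγκ e2.2 e1.2)⟩
      have hz' : ∀ γ < β, BB.sq γ (f y) (BB.lub β Fx) ∧ BB.sq γ (BB.lub β Fx) (f y) := by
        intro γ hγ
        have hγκ : γ < κ := hγ.trans hβ
        have e1 := hcone g₀ hg₀ y γ hγ
        have e2 := hgxy g₀ hg₀ γ hγ.le
        have e3 := BB.ax1 hγ hβ (hub_x g₀ hg₀)
        exact ⟨BB.sq_trans hγκ e1.1 (BB.sq_trans hγκ e2.2 e3.1),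
               BB.sq_trans hγκ e3.2 (BB.sq_trans hγκ e2.1 e1.2)⟩
      have hw : ∀ w ∈ Fx, BB.sq β w (BB.lub β Fy) := by
        rintro _ ⟨g, hg, rfl⟩
        exact BB.sq_trans hβ (hgxy g hg β le_rfl).1 (hub_y g hg)
      have hw' : ∀ w ∈ Fy, BB.sq β w (BB.lub β Fx) := by
        rintro _ ⟨g, hg, rfl⟩
        exact BB.sq_trans hβ (hgxy g hg β le_rfl).2 (hub_x g hg)
      have h1 := (BB.ax3_least hβ (f x) Fx hsubx (BB.lub β Fy) hz hw).2
      have h2 := (BB.ax3_least hβ (f y) Fy hsuby (BB.lub β Fx) hz' hw').2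
      have heq : BB.lub β Fx = BB.lub β Fy := le_antisymm h1 h2
      rw [heq]
      exact BB.sq_refl hα _
end

section
/- If A and B are basic models, then the set [A →m B] of functions from A to B that are α-monotonic for all α < κ, equipped with the pointwise order ≤ and pointwise preorders ⊑_α, is itself a basic model. -/
namespace Stmt3Aux
open BasicModel

universe u
variable {A B : Type u} [CompleteLattice A] [CompleteLattice B] {κ : Ordinal}
  (BA : BasicModel A κ) (BB : BasicModel B κ)

abbrev Subm := {g : A → B // ∀ α < κ, MonotonicAt BA BB α g}

def subSup : SupSet (Subm BA BB) :=
  ⟨fun F => ⟨fun a => sSup ((fun f : Subm BA BB => f.1 a) '' F), by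
    intro α hα x y hxy
    have h := BB.ax4 hα ((fun f : Subm BA BB => (f.1 x, f.1 y)) '' F) ?_
    · simpa [Set.image_image] using h
    · rintro p ⟨f, hf, rfl⟩
      exact f.2 α hα x y hxy⟩⟩

def subLattice : CompleteLattice (Subm BA BB) :=
  letI := subSup BA BB
  completeLatticeOfSup _ (by
    intro F
    constructor
    · intro f hf a
      exact le_sSup ⟨f, hf, rfl⟩
    · intro g hg a
      exact sSup_le (by rintro _ ⟨f, hf, rfl⟩; exact hg hf a))

def lubFun (α : Ordinal) (X : Set (Subm BA BB)) : A → B :=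
  fun a => BB.lub α ((fun f : Subm BA BB => f.1 a) '' X)

/-- Cone hypothesis in pointwise form. -/
def ConeHyp (α : Ordinal) (x : Subm BA BB) (X : Set (Subm BA BB)) : Prop :=
  X ⊆ {y | ∀ β < α, (∀ a, BB.sq β (x.1 a) (y.1 a)) ∧ (∀ a, BB.sq β (y.1 a) (x.1 a))}

theorem lub_ub {α : Ordinal} (hα : α < κ) (x : Subm BA BB) (X : Set (Subm BA BB))
    (hX : ConeHyp BA BB α x X) {g : Subm BA BB} (hg : g ∈ X) (a : A) :
    BB.sq α (g.1 a) (lubFun BA BB α X a) := by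
  refine BB.ax3_ub hα (x.1 a) _ ?_ (g.1 a) ⟨g, hg, rfl⟩
  rintro _ ⟨h, hh, rfl⟩ β hβ
  exact ⟨(hX hh β hβ).1 a, (hX hh β hβ).2 a⟩

theorem lub_least {α : Ordinal} (hα : α < κ) (x : Subm BA BB) (X : Set (Subm BA BB))
    (hX : ConeHyp BA BB α x X) (a : A) (z : B)
    (hz : ∀ β < α, BB.sq β (x.1 a) z ∧ BB.sq β z (x.1 a))
    (hub : ∀ g ∈ X, BB.sq α (g.1 a) z) :
    BB.sq α (lubFun BA BB α X a) z ∧ lubFun BA BB α X a ≤ z := by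
  refine BB.ax3_least hα (x.1 a) _ ?_ z hz ?_
  · rintro _ ⟨h, hh, rfl⟩ β hβ
    exact ⟨(hX hh β hβ).1 a, (hX hh β hβ).2 a⟩
  · rintro _ ⟨h, hh, rfl⟩
    exact hub h hh

theorem lub_cone {α : Ordinal} (hα : α < κ) (x : Subm BA BB) (X : Set (Subm BA BB))
    (hX : ConeHyp BA BB α x X) {g : Subm BA BB} (hg : g ∈ X) (a : A) {β : Ordinal} (hβ : β < α) :
    BB.sq β (x.1 a) (lubFun BA BB α X a) ∧ BB.sq β (lubFun BA BB α X a) (x.1 a) := by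
  have h1 := BB.ax1 hβ hα (lub_ub BA BB hα x X hX hg a)
  have h2 := hX hg β hβ
  have hβκ : β < κ := hβ.trans hα
  exact ⟨BB.sq_trans hβκ (h2.1 a) h1.1, BB.sq_trans hβκ h1.2 (h2.2 a)⟩

theorem lub_mono {α : Ordinal} (hα : α < κ) (x : Subm BA BB) (X : Set (Subm BA BB))
    (hX : ConeHyp BA BB α x X) : ∀ β < κ, MonotonicAt BA BB β (lubFun BA BB α X) := by
  rcases X.eq_empty_or_nonempty with rfl | ⟨g, hg⟩
  · intro β hβ a b _
    have : lubFun BA BB α (∅ : Set (Subm BA BB)) = fun _ => BB.lub α ∅ := by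
      funext a; simp [lubFun]
    rw [this]
    exact BB.sq_refl hβ _
  intro β hβ a b hab
  rcases lt_trichotomy β α with hβα | rfl | hαβ
  · -- β < α : use cone membership at a and b
    have h1 := lub_cone BA BB hα x X hX hg a hβα
    have h2 := lub_cone BA BB hα x X hX hg b hβα
    have hx := x.2 β hβ a b hab
    exact BB.sq_trans hβ h1.2 (BB.sq_trans hβ hx h2.1)
  · -- β = α
    refine (lub_least BA BB hα x X hX a (lubFun BA BB β X b) ?_ ?_).1
    · intro β' hβ'
      have hab' := BA.ax1 hβ' hα hab
      have hxa : BB.sq β' (x.1 a) (x.1 b) := x.2 β' (hβ'.trans hα) a b hab'.1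
      have hxb : BB.sq β' (x.1 b) (x.1 a) := x.2 β' (hβ'.trans hα) b a hab'.2
      have hc := lub_cone BA BB hα x X hX hg b hβ'
      have hβ'κ : β' < κ := hβ'.trans hα
      exact ⟨BB.sq_trans hβ'κ hxa hc.1, BB.sq_trans hβ'κ hc.2 hxb⟩
    · intro h hh
      have : BB.sq β (h.1 a) (h.1 b) := h.2 β hα a b hab
      exact BB.sq_trans hα this (lub_ub BA BB hα x X hX hh b)
  · -- α < β : the two values are equal
    have hab' := BA.ax1 hαβ hβ hab
    have key : ∀ (u v : A), BA.sq α u v → BA.sq α v u →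
        lubFun BA BB α X u ≤ lubFun BA BB α X v := by
      intro u v huv hvu
      refine (lub_least BA BB hα x X hX u (lubFun BA BB α X v) ?_ ?_).2
      · intro β' hβ'
        have huv' := BA.ax1 hβ' hα huv
        have hxa : BB.sq β' (x.1 u) (x.1 v) := x.2 β' (hβ'.trans hα) u v huv'.1
        have hxb : BB.sq β' (x.1 v) (x.1 u) := x.2 β' (hβ'.trans hα) v u huv'.2
        have hc := lub_cone BA BB hα x X hX hg v hβ'
        have hβ'κ : β' < κ := hβ'.trans hα
        exact ⟨BB.sq_trans hβ'κ hxa hc.1, BB.sq_trans hβ'κ hc.2 hxb⟩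
      · intro h hh
        have : BB.sq α (h.1 u) (h.1 v) := h.2 α hα u v huv
        exact BB.sq_trans hα this (lub_ub BA BB hα x X hX hh v)
    have heq : lubFun BA BB α X a = lubFun BA BB α X b :=
      le_antisymm (key a b hab'.1 hab'.2) (key b a hab'.2 hab'.1)
    rw [heq]
    exact BB.sq_refl hβ _

open Classical in
noncomputable def subLub (α : Ordinal) (X : Set (Subm BA BB)) : Subm BA BB :=
  if h : ∀ β < κ, MonotonicAt BA BB β (lubFun BA BB α X) then ⟨lubFun BA BB α X, h⟩
  else ⟨fun _ => BB.lub α ∅, fun β hβ _ _ _ => BB.sq_refl hβ _⟩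

theorem subLub_eq {α : Ordinal} {X : Set (Subm BA BB)}
    (h : ∀ β < κ, MonotonicAt BA BB β (lubFun BA BB α X)) :
    subLub BA BB α X = ⟨lubFun BA BB α X, h⟩ := by
  rw [subLub, dif_pos h]

end Stmt3Aux


open BasicModel Stmt3Aux in
/-- the set `[A →m B]` of functions that are α-monotonic for all `α < κ`,
with pointwise `≤` and pointwise `⊑_α`, is itself a basic model. -/
theorem stmt_3 {A B : Type u} [CompleteLattice A] [CompleteLattice B] {κ : Ordinal}
    (BA : BasicModel A κ) (BB : BasicModel B κ) :
    ∃ inst : CompleteLattice {g : A → B // ∀ α < κ, MonotonicAt BA BB α g},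
      (∀ f g : {g : A → B // ∀ α < κ, MonotonicAt BA BB α g},
          (letI := inst; f ≤ g) ↔ ∀ x : A, f.1 x ≤ g.1 x) ∧
      ∃ Bm : @BasicModel {g : A → B // ∀ α < κ, MonotonicAt BA BB α g} inst κ,
        ∀ (α : Ordinal) (f g : {g : A → B // ∀ α < κ, MonotonicAt BA BB α g}),
          α < κ → (Bm.sq α f g ↔ ∀ x : A, BB.sq α (f.1 x) (g.1 x)) := by
  
  classical
  letI := subLattice BA BB
  refine ⟨subLattice BA BB, fun f g => Iff.rfl, ?_⟩
  refine ⟨{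
    sq := fun α f g => ∀ a, BB.sq α (f.1 a) (g.1 a)
    lub := subLub BA BB
    sq_refl := fun hα f a => BB.sq_refl hα _
    sq_trans := by
      intro α hα x y z h1 h2 a
      exact BB.sq_trans hα (h1 a) (h2 a)
    ax1 := by
      intro α β hαβ hβ x y h
      exact ⟨fun a => (BB.ax1 hαβ hβ (h a)).1, fun a => (BB.ax1 hαβ hβ (h a)).2⟩
    ax2 := fun h =>
      Subtype.ext (funext fun a => BB.ax2 fun α hα => ⟨(h α hα).1 a, (h α hα).2 a⟩)
    ax3_ub := ?_
    ax3_least := ?_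
    ax4 := ?_ }, fun α f g hα => Iff.rfl⟩
  · intro α hα x X hX g hg a
    rw [subLub_eq BA BB (lub_mono BA BB hα x X hX)]
    exact lub_ub BA BB hα x X hX hg a
  · intro α hα x X hX z hz hub
    have hm := lub_mono BA BB hα x X hX
    constructor
    · intro a
      rw [subLub_eq BA BB hm]
      exact (lub_least BA BB hα x X hX a (z.1 a)
        (fun β hβ => ⟨(hz β hβ).1 a, (hz β hβ).2 a⟩) (fun g hg => hub g hg a)).1
    · show (subLub BA BB α X).1 ≤ z.1
      rw [subLub_eq BA BB hm]
      intro a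
      exact (lub_least BA BB hα x X hX a (z.1 a)
        (fun β hβ => ⟨(hz β hβ).1 a, (hz β hβ).2 a⟩) (fun g hg => hub g hg a)).2
  · intro α hα S hS a
    have h := BB.ax4 hα
      ((fun p : Subm BA BB × Subm BA BB => (p.1.1 a, p.2.1 a)) '' S) ?_
    · show BB.sq α (sSup ((fun f : Subm BA BB => f.1 a) '' (Prod.fst '' S)))
        (sSup ((fun f : Subm BA BB => f.1 a) '' (Prod.snd '' S)))
      simpa [Set.image_image] using h
    · rintro p ⟨q, hq, rfl⟩
      exact hS q hq a
end

section
/- If x, y are truth values in the infinite-valued domain V with x ≤ y and x =_β y for all β < α, then x ⊑_α y. -/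
/-- The infinite-valued truth domain: values `F β`, `0`, `T β` for ordinals `β`. -/
inductive TV where
  | F : Ordinal → TV
  | zero : TV
  | T : Ordinal → TV

namespace TV

/-- `order x`: the order of a truth value (`∞ = ⊤` for `0`). -/
def ord : TV → WithTop Ordinal
  | F β => (β : Ordinal)
  | zero => ⊤
  | T β => (β : Ordinal)

/-- The linear order `F_0 < F_1 < ⋯ < 0 < ⋯ < T_1 < T_0` on truth values. -/
def tle : TV → TV → Prop
  | F β, F γ => β ≤ γ
  | F _, zero => True
  | F _, T _ => True
  | zero, F _ => False
  | zero, zero => True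
  | zero, T _ => True
  | T β, T γ => γ ≤ β
  | T _, F _ => False
  | T _, zero => False

/-- Membership in the truth domain `V` determined by `κ`: the order is `< κ` or the value is `0`. -/
def memV (κ : Ordinal) (x : TV) : Prop :=
  x = zero ∨ ord x < (κ : WithTop Ordinal)

/-- The relation `x ⊑_α y` on truth values. -/
def tsq (α : Ordinal) (x y : TV) : Prop :=
  (x = y ∧ ord x < (α : WithTop Ordinal)) ∨
  (x = F α ∧ (α : WithTop Ordinal) ≤ ord y) ∨
  (y = T α ∧ (α : WithTop Ordinal) ≤ ord x) ∨
  ((α : WithTop Ordinal) < ord x ∧ (α : WithTop Ordinal) < ord y)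

/-- `x =_α y`. -/
def teq (α : Ordinal) (x y : TV) : Prop :=
  tsq α x y ∧ tsq α y x

open Classical in
/-- The meet (minimum) of two truth values with respect to `tle`. -/
noncomputable def tmin (x y : TV) : TV :=
  if tle x y then x else y

/-- Negation on truth values. -/
def tneg : TV → TV
  | F β => T (β + 1)
  | zero => zero
  | T β => F (β + 1)

/-- `s` is the supremum of the set `S` of truth values with respect to `tle`. -/
def isSupTV (S : Set TV) (s : TV) : Prop :=
  (∀ x ∈ S, tle x s) ∧ ∀ b, (∀ x ∈ S, tle x b) → tle s b

end TV

open TV in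
lemma teq_ne_aux {β : Ordinal} {x y : TV} (h : teq β x y) (hne : x ≠ y) :
    (β : WithTop Ordinal) < ord x ∧ (β : WithTop Ordinal) < ord y := by
  obtain ⟨h1, h2⟩ := h
  rcases h1 with ⟨hxy, _⟩ | ⟨hxF, hby⟩ | ⟨hyT, hbx⟩ | ⟨hbx, hby⟩
  · exact absurd hxy hne
  · -- x = F β; derive contradiction from h2
    rcases h2 with ⟨hyx, _⟩ | ⟨hyF, _⟩ | ⟨hxT, _⟩ | ⟨_, hbx⟩
    · exact absurd hyx.symm hne
    · exact absurd (hyF.trans hxF.symm).symm hne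
    · rw [hxF] at hxT; exact absurd hxT (by simp)
    · rw [hxF] at hbx; simp [ord] at hbx
  · rcases h2 with ⟨hyx, _⟩ | ⟨hyF, _⟩ | ⟨hxT, _⟩ | ⟨hby', _⟩
    · exact absurd hyx.symm hne
    · rw [hyT] at hyF; exact absurd hyF (by simp)
    · exact absurd (hxT.trans hyT.symm) hne
    · rw [hyT] at hby'; simp [ord] at hby'
  · exact ⟨hbx, hby⟩

open TV in
lemma ord_ge_of_forall {α : Ordinal} {x : TV}
    (h : ∀ β < α, (β : WithTop Ordinal) < ord x) : (α : WithTop Ordinal) ≤ ord x := by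
  cases hox : ord x with
  | top => exact le_top
  | coe c =>
    by_contra hc
    push_neg at hc
    rw [WithTop.coe_lt_coe] at hc
    have := h c hc
    rw [hox] at this
    exact absurd this (lt_irrefl _)

open TV in
/-- if `x ≤ y` in `V` and `x =_β y` for all `β < α`, then `x ⊑_α y`. -/
theorem stmt_7 {κ α : Ordinal} (hα : α < κ) (x y : TV)
    (hx : memV κ x) (hy : memV κ y)
    (hle : tle x y) (heq : ∀ β < α, teq β x y) :
    tsq α x y := by
  by_cases hne : x = y
  · subst hne
    rcases lt_trichotomy (ord x) (α : WithTop Ordinal) with h | h | h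
    · exact Or.inl ⟨rfl, h⟩
    · -- ord x = α, so x = F α or x = T α
      cases x with
      | zero => simp [ord] at h
      | F γ =>
        have : γ = α := by simpa [ord, WithTop.coe_inj] using h
        subst this
        exact Or.inr (Or.inl ⟨rfl, le_of_eq h.symm⟩)
      | T γ =>
        have : γ = α := by simpa [ord, WithTop.coe_inj] using h
        subst this
        exact Or.inr (Or.inr (Or.inl ⟨rfl, le_of_eq h.symm⟩))
    · exact Or.inr (Or.inr (Or.inr ⟨h, h⟩))
  · have hkey : ∀ β < α, (β : WithTop Ordinal) < ord x ∧ (β : WithTop Ordinal) < ord y :=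
      fun β hβ => teq_ne_aux (heq β hβ) hne
    have hxa : (α : WithTop Ordinal) ≤ ord x := ord_ge_of_forall fun β hβ => (hkey β hβ).1
    have hya : (α : WithTop Ordinal) ≤ ord y := ord_ge_of_forall fun β hβ => (hkey β hβ).2
    rcases eq_or_lt_of_le hxa with hx1 | hx1
    · -- ord x = α
      cases x with
      | zero => simp [ord] at hx1
      | F γ =>
        have : γ = α := by simpa [ord, WithTop.coe_inj] using hx1.symm
        subst this
        exact Or.inr (Or.inl ⟨rfl, hya⟩)
      | T γ =>
        have hγ : γ = α := by simpa [ord, WithTop.coe_inj] using hx1.symm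
        subst hγ
        -- tle (T γ) y forces y = T δ with δ ≤ γ
        cases y with
        | zero => exact absurd hle (by simp [tle])
        | F δ => exact absurd hle (by simp [tle])
        | T δ =>
          have hδ : δ ≤ γ := hle
          have hδ' : γ ≤ δ := by simpa [ord, WithTop.coe_le_coe] using hya
          exact absurd (congrArg TV.T (le_antisymm hδ' hδ)) hne
    · rcases eq_or_lt_of_le hya with hy1 | hy1
      · cases y with
        | zero => simp [ord] at hy1
        | T γ =>
          have : γ = α := by simpa [ord, WithTop.coe_inj] using hy1.symm
          subst this
          exact Or.inr (Or.inr (Or.inl ⟨rfl, le_of_lt hx1⟩))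
        | F γ =>
          have hγ : γ = α := by simpa [ord, WithTop.coe_inj] using hy1.symm
          subst hγ
          -- tle x (F γ) forces x = F δ, δ ≤ γ, contradicting γ < ord x
          cases x with
          | zero => exact absurd hle (by simp [tle])
          | T δ => exact absurd hle (by simp [tle])
          | F δ =>
            have hδ : δ ≤ γ := hle
            have : (γ : WithTop Ordinal) < (δ : Ordinal) := hx1
            rw [WithTop.coe_lt_coe] at this
            exact absurd hδ (not_le.mpr this)
      · exact Or.inr (Or.inr (Or.inr ⟨hx1, hy1⟩))
end

section
/- Let L be a basic model, α ≤ κ an ordinal, and (x_β)_{β<α} a sequence in L such that x_β =_β x_γ and x_β ≤ x_γ whenever β < γ < α. Then x = ⋁_{β<α} x_β satisfies x_β =_β x for all β < α. -/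
open BasicModel in
/-- if `(x β)_{β<α}` is a sequence in a basic model with `x β =_β x γ` and
`x β ≤ x γ` for `β < γ < α` (where `α ≤ κ`), then `x = ⋁_{β<α} x β` satisfies
`x β =_β x` for all `β < α`. -/
theorem stmt_8 {L : Type*} [CompleteLattice L] {κ : Ordinal} (B : BasicModel L κ)
    {α : Ordinal} (hα : α ≤ κ) (x : Ordinal → L)
    (heq : ∀ β γ : Ordinal, β < γ → γ < α → B.eqAt β (x β) (x γ))
    (hle : ∀ β γ : Ordinal, β < γ → γ < α → x β ≤ x γ) :
    ∀ β < α, B.eqAt β (x β) (sSup (x '' {β : Ordinal | β < α})) := by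
  intro β hβ
  have hβκ : β < κ := lt_of_lt_of_le hβ hα
  set A : Set Ordinal := {γ | β ≤ γ ∧ γ < α} with hA
  have hAne : A.Nonempty := ⟨β, le_refl β, hβ⟩
  -- tail sup equals full sup
  have hsup : sSup (x '' A) = sSup (x '' {γ : Ordinal | γ < α}) := by
    apply le_antisymm
    · exact sSup_le_sSup (Set.image_mono (fun γ hγ => hγ.2))
    · apply sSup_le
      rintro _ ⟨γ, hγ, rfl⟩
      rcases le_or_gt β γ with h | h
      · exact le_sSup ⟨γ, ⟨h, hγ⟩, rfl⟩
      · exact le_trans (hle γ β h hβ) (le_sSup ⟨β, ⟨le_refl β, hβ⟩, rfl⟩)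
  have hsq : ∀ γ ∈ A, B.sq β (x β) (x γ) ∧ B.sq β (x γ) (x β) := by
    rintro γ ⟨h1, h2⟩
    rcases eq_or_lt_of_le h1 with rfl | h
    · exact ⟨B.sq_refl hβκ _, B.sq_refl hβκ _⟩
    · exact ⟨(heq β γ h h2).1, (heq β γ h h2).2⟩
  constructor
  · have := B.ax4 hβκ ((fun γ => (x β, x γ)) '' A) (by
      rintro _ ⟨γ, hγ, rfl⟩; exact (hsq γ hγ).1)
    have hfst : Prod.fst '' ((fun γ => ((x β : L), x γ)) '' A) = {x β} := by
      rw [Set.image_image]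
      exact Set.Nonempty.image_const hAne _
    rw [hfst] at this
    have hsnd : Prod.snd '' ((fun γ => ((x β : L), x γ)) '' A) = x '' A := by
      rw [Set.image_image]
    rw [hsnd, hsup, sSup_singleton] at this
    exact this
  · have := B.ax4 hβκ ((fun γ => (x γ, x β)) '' A) (by
      rintro _ ⟨γ, hγ, rfl⟩; exact (hsq γ hγ).2)
    have hfst : Prod.fst '' ((fun γ => (x γ, (x β : L))) '' A) = x '' A := by
      rw [Set.image_image]
    have hsnd : Prod.snd '' ((fun γ => (x γ, (x β : L))) '' A) = {x β} := by
      rw [Set.image_image]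
      exact Set.Nonempty.image_const hAne _
    rw [hfst, hsnd, hsup, sSup_singleton] at this
    exact this
end

section
/- In the infinite-valued truth domain V, the meet operation is α-monotonic: if x1 ⊑_α y1 and x2 ⊑_α y2 then min(x1, x2) ⊑_α min(y1, y2). -/
namespace TV

variable {α β : Ordinal} {x y z : TV}

lemma tle_F_of_le (h : (β : WithTop Ordinal) ≤ ord z) : tle (F β) z := by
  cases z with
  | F γ => exact (WithTop.coe_le_coe.mp h : β ≤ γ)
  | zero => trivial
  | T γ => trivial

lemma tle_T_of_le (h : (β : WithTop Ordinal) ≤ ord z) : tle z (T β) := by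
  cases z with
  | F γ => trivial
  | zero => trivial
  | T γ => exact (WithTop.coe_le_coe.mp h : β ≤ γ)

lemma ord_le_of_tle_F (h : tle z (F β)) : ord z ≤ (β : WithTop Ordinal) := by
  cases z with
  | F γ => exact WithTop.coe_le_coe.mpr (h : γ ≤ β)
  | zero => exact h.elim
  | T γ => exact h.elim

lemma ord_le_of_T_tle (h : tle (T β) z) : ord z ≤ (β : WithTop Ordinal) := by
  cases z with
  | F γ => exact h.elim
  | zero => exact h.elim
  | T γ => exact WithTop.coe_le_coe.mpr (h : γ ≤ β)

lemma tmin_eq_or (x y : TV) : tmin x y = x ∨ tmin x y = y := by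
  unfold tmin; split_ifs <;> simp

lemma eq_of_ord_eq (h : ord z = (β : WithTop Ordinal)) : z = F β ∨ z = T β := by
  cases z with
  | F γ => left; congr 1; exact WithTop.coe_injective h
  | zero => exact absurd h (by simp [ord])
  | T γ => right; congr 1; exact WithTop.coe_injective h

lemma tsq_char (h : tsq α x y) :
    (x = y ∧ ord x < (α : WithTop Ordinal)) ∨
      ((α : WithTop Ordinal) ≤ ord x ∧ (α : WithTop Ordinal) ≤ ord y) := by
  rcases h with ⟨hxy, hlt⟩ | ⟨hx, hy⟩ | ⟨hy, hx⟩ | ⟨hx, hy⟩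
  · exact Or.inl ⟨hxy, hlt⟩
  · exact Or.inr ⟨le_of_eq (by rw [hx]; rfl), hy⟩
  · exact Or.inr ⟨hx, le_of_eq (by rw [hy]; rfl)⟩
  · exact Or.inr ⟨hx.le, hy.le⟩

lemma tsq_F (h : tsq α x (F α)) : x = F α := by
  rcases h with ⟨hxy, _⟩ | ⟨hx, _⟩ | ⟨hy, _⟩ | ⟨_, hy⟩
  · exact hxy
  · exact hx
  · exact absurd hy (by simp)
  · exact absurd hy (by simp [ord])

lemma tsq_T (h : tsq α (T α) y) : y = T α := by
  rcases h with ⟨hxy, _⟩ | ⟨hx, _⟩ | ⟨hy, _⟩ | ⟨hx, _⟩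
  · exact hxy.symm
  · exact absurd hx (by simp)
  · exact hy
  · exact absurd hx (by simp [ord])

lemma tmin_F_left (h : (β : WithTop Ordinal) ≤ ord y) : tmin (F β) y = F β := by
  unfold tmin; rw [if_pos (tle_F_of_le h)]

lemma tmin_F_right (h : (α : WithTop Ordinal) ≤ ord x) : tmin x (F α) = F α := by
  unfold tmin; split_ifs with hc
  · have hle : ord x = (α : WithTop Ordinal) := le_antisymm (ord_le_of_tle_F hc) h
    rcases eq_of_ord_eq hle with rfl | rfl
    · rfl
    · exact hc.elim
  · rfl

lemma tmin_T_left (h : ord y ≤ (β : WithTop Ordinal) → False) : tmin (T β) y = y := by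
  unfold tmin; exact if_neg (fun hc => h (ord_le_of_T_tle hc))

lemma tmin_eq_T (hx : (α : WithTop Ordinal) ≤ ord x) (hy : (α : WithTop Ordinal) ≤ ord y)
    (h : tmin x y = T α) : x = T α ∧ y = T α := by
  unfold tmin at h; split_ifs at h with hc
  · subst h
    have hle : ord y = (α : WithTop Ordinal) := le_antisymm (ord_le_of_T_tle hc) hy
    rcases eq_of_ord_eq hle with rfl | rfl
    · exact hc.elim
    · exact ⟨rfl, rfl⟩
  · subst h; exact absurd (tle_T_of_le hx) hc

end TV

open TV in
/-- the meet of truth values is α-monotonic: if `x1 ⊑_α y1` and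
`x2 ⊑_α y2` then `min x1 x2 ⊑_α min y1 y2`. -/
theorem stmt_9 {κ α : Ordinal} (hα : α < κ) (x1 x2 y1 y2 : TV)
    (hx1 : memV κ x1) (hx2 : memV κ x2) (hy1 : memV κ y1) (hy2 : memV κ y2)
    (h1 : tsq α x1 y1) (h2 : tsq α x2 y2) :
    tsq α (tmin x1 x2) (tmin y1 y2) := by
  clear hα hx1 hx2 hy1 hy2
  rcases tsq_char h1 with ⟨rfl, hl1⟩ | ⟨ha1, hb1⟩ <;>
    rcases tsq_char h2 with ⟨rfl, hl2⟩ | ⟨ha2, hb2⟩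
  · -- both low
    refine Or.inl ⟨rfl, ?_⟩
    rcases tmin_eq_or x1 x2 with h | h <;> rw [h]
    · exact hl1
    · exact hl2
  · -- pair 1 low, pair 2 high
    cases x1 with
    | F β =>
      have hbx : (β : WithTop Ordinal) ≤ ord x2 := le_of_lt (lt_of_lt_of_le hl1 ha2)
      have hby : (β : WithTop Ordinal) ≤ ord y2 := le_of_lt (lt_of_lt_of_le hl1 hb2)
      rw [tmin_F_left hbx, tmin_F_left hby]
      exact Or.inl ⟨rfl, hl1⟩
    | zero => exact absurd hl1 (by simp [ord])
    | T β =>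
      rw [tmin_T_left (fun hc => absurd (lt_of_le_of_lt (ha2.trans hc) hl1) (lt_irrefl _)),
          tmin_T_left (fun hc => absurd (lt_of_le_of_lt (hb2.trans hc) hl1) (lt_irrefl _))]
      exact h2
  · -- pair 1 high, pair 2 low
    cases x2 with
    | F β =>
      have hbx : (β : WithTop Ordinal) ≤ ord x1 := le_of_lt (lt_of_lt_of_le hl2 ha1)
      have hby : (β : WithTop Ordinal) ≤ ord y1 := le_of_lt (lt_of_lt_of_le hl2 hb1)
      rw [tmin_F_right hbx, tmin_F_right hby]
      exact Or.inl ⟨rfl, hl2⟩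
    | zero => exact absurd hl2 (by simp [ord])
    | T β =>
      have e1 : tmin x1 (T β) = x1 := by
        unfold tmin; rw [if_pos (tle_T_of_le (le_of_lt (lt_of_lt_of_le hl2 ha1)))]
      have e2 : tmin y1 (T β) = y1 := by
        unfold tmin; rw [if_pos (tle_T_of_le (le_of_lt (lt_of_lt_of_le hl2 hb1)))]
      rw [e1, e2]
      exact h1
  · -- both high
    have hm : (α : WithTop Ordinal) ≤ ord (tmin x1 x2) := by
      rcases tmin_eq_or x1 x2 with h | h <;> rw [h]
      · exact ha1
      · exact ha2
    have hn : (α : WithTop Ordinal) ≤ ord (tmin y1 y2) := by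
      rcases tmin_eq_or y1 y2 with h | h <;> rw [h]
      · exact hb1
      · exact hb2
    by_cases hmF : tmin x1 x2 = F α
    · exact Or.inr (Or.inl ⟨hmF, hn⟩)
    by_cases hnT : tmin y1 y2 = T α
    · exact Or.inr (Or.inr (Or.inl ⟨hnT, hm⟩))
    have hmlt : (α : WithTop Ordinal) < ord (tmin x1 x2) := by
      rcases lt_or_eq_of_le hm with h | h
      · exact h
      rcases eq_of_ord_eq h.symm with h' | h'
      · exact absurd h' hmF
      · obtain ⟨e1, e2⟩ := tmin_eq_T ha1 ha2 h'
        have f1 : y1 = T α := tsq_T (e1 ▸ h1)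
        have f2 : y2 = T α := tsq_T (e2 ▸ h2)
        refine absurd ?_ hnT
        rw [f1, f2]
        unfold tmin; split_ifs <;> rfl
    have hnlt : (α : WithTop Ordinal) < ord (tmin y1 y2) := by
      rcases lt_or_eq_of_le hn with h | h
      · exact h
      rcases eq_of_ord_eq h.symm with h' | h'
      · exfalso
        rcases tmin_eq_or y1 y2 with h'' | h''
        · have fy : y1 = F α := h''.symm.trans h'
          have f1 : x1 = F α := tsq_F (fy ▸ h1)
          exact hmF (by rw [f1]; exact tmin_F_left ha2)
        · have fy : y2 = F α := h''.symm.trans h'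
          have f2 : x2 = F α := tsq_F (fy ▸ h2)
          exact hmF (by rw [f2]; exact tmin_F_right ha1)
      · exact absurd h' hnT
    exact Or.inr (Or.inr (Or.inr ⟨hmlt, hnlt⟩))
end

section
/- In the infinite-valued truth domain V, the negation operation ¬ (defined by ¬F_β = T_{β+1}, ¬T_β = F_{β+1}, ¬0 = 0) is α-monotonic for every α < κ: if x ⊑_α y then ¬x ⊑_α ¬y. -/
open TV in
/-- negation on the truth domain `V` is α-monotonic for every `α < κ`. -/
theorem stmt_10 {κ : Ordinal} (hsucc : ∀ β < κ, β + 1 < κ) {α : Ordinal} (hα : α < κ)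
    (x y : TV) (hx : memV κ x) (hy : memV κ y) (h : tsq α x y) :
    tsq α (tneg x) (tneg y) := by
  clear hsucc hα hx hy
  have key : ∀ z : TV, z = F α ∨ z = T α →
      ∀ w : TV, (α : WithTop Ordinal) ≤ ord w →
      (α : WithTop Ordinal) < ord (tneg w) := by
    intro z hz w hw
    cases w with
    | zero => simp [tneg, ord]
    | F β =>
        simp only [ord, WithTop.coe_le_coe] at hw
        simp only [tneg, ord, WithTop.coe_lt_coe]
        exact lt_of_le_of_lt hw (lt_add_one β)
    | T β =>
        simp only [ord, WithTop.coe_le_coe] at hw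
        simp only [tneg, ord, WithTop.coe_lt_coe]
        exact lt_of_le_of_lt hw (lt_add_one β)
  rcases h with ⟨rfl, hlt⟩ | ⟨rfl, hle⟩ | ⟨rfl, hle⟩ | ⟨h1, h2⟩
  · -- x = y, ord x < α
    cases x with
    | zero => simp [ord] at hlt
    | F β =>
        simp only [ord, WithTop.coe_lt_coe] at hlt
        rcases lt_or_eq_of_le (Order.add_one_le_of_lt hlt) with h' | h'
        · exact Or.inl ⟨rfl, by simp only [tneg, ord, WithTop.coe_lt_coe]; exact h'⟩
        · refine Or.inr (Or.inr (Or.inl ⟨by simp [tneg, h'], ?_⟩))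
          simp [tneg, ord, h']
    | T β =>
        simp only [ord, WithTop.coe_lt_coe] at hlt
        rcases lt_or_eq_of_le (Order.add_one_le_of_lt hlt) with h' | h'
        · exact Or.inl ⟨rfl, by simp only [tneg, ord, WithTop.coe_lt_coe]; exact h'⟩
        · refine Or.inr (Or.inl ⟨by simp [tneg, h'], ?_⟩)
          simp [tneg, ord, h']
  · -- x = F α
    refine Or.inr (Or.inr (Or.inr ⟨?_, key _ (Or.inl rfl) y hle⟩))
    simp only [tneg, ord, WithTop.coe_lt_coe]; exact lt_add_one α
  · -- y = T α
    refine Or.inr (Or.inr (Or.inr ⟨key _ (Or.inr rfl) x hle, ?_⟩))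
    simp only [tneg, ord, WithTop.coe_lt_coe]; exact lt_add_one α
  · exact Or.inr (Or.inr (Or.inr ⟨key _ (Or.inl rfl) x h1.le, key _ (Or.inl rfl) y h2.le⟩))
end

section
/- In the infinite-valued truth domain V, arbitrary joins are α-monotonic: if x_j ⊑_α y_j for all j ∈ J, then sup_j x_j ⊑_α sup_j y_j. -/
namespace TV

lemma tle_antisymm : ∀ {a b : TV}, tle a b → tle b a → a = b := by
  intro a b; cases a <;> cases b <;> simp [tle] <;> intro h1 h2 <;>
    first | exact le_antisymm h1 h2 | exact le_antisymm h2 h1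

lemma ord_eq_iff {α : Ordinal} : ∀ {z : TV}, ord z = (α : WithTop Ordinal) ↔ (z = F α ∨ z = T α) := by
  intro z; cases z <;> simp [ord]

lemma tsq_refl (α : Ordinal) (z : TV) : tsq α z z := by
  rcases lt_trichotomy (ord z) (α : WithTop Ordinal) with hlt | heq | hgt
  · exact Or.inl ⟨rfl, hlt⟩
  · rcases ord_eq_iff.mp heq with hF | hT
    · exact Or.inr (Or.inl ⟨hF, heq.ge⟩)
    · exact Or.inr (Or.inr (Or.inl ⟨hT, heq.ge⟩))
  · exact Or.inr (Or.inr (Or.inr ⟨hgt, hgt⟩))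

/-- if either side has order < α, the two sides are equal. -/
lemma tsq_low_eq {α : Ordinal} {a b : TV} (hab : tsq α a b)
    (hlow : ord a < (α : WithTop Ordinal) ∨ ord b < (α : WithTop Ordinal)) : a = b := by
  rcases hab with ⟨he, _⟩ | ⟨ha, hb⟩ | ⟨hb, ha⟩ | ⟨ha, hb⟩
  · exact he
  · exfalso; rcases hlow with hl | hl
    · rw [ha] at hl; simp [ord] at hl
    · exact absurd hb hl.not_ge
  · exfalso; rcases hlow with hl | hl
    · exact absurd ha hl.not_ge
    · rw [hb] at hl; simp [ord] at hl
  · exfalso; rcases hlow with hl | hl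
    · exact absurd hl ha.asymm
    · exact absurd hl hb.asymm

lemma sup_unique {S : Set TV} {s t : TV} (hs : isSupTV S s) (ht : isSupTV S t) : s = t :=
  tle_antisymm (hs.2 t ht.1) (ht.2 s hs.1)

lemma sup_T_mem {J : Type*} {x : J → TV} {s : TV} (hs : isSupTV (Set.range x) s)
    {γ : Ordinal} (hsg : s = T γ) : ∃ j, x j = T γ := by
  by_contra hno
  push_neg at hno
  by_cases hD : ∃ δ, ∃ j, x j = T δ
  · set D : Set Ordinal := {δ | ∃ j, x j = T δ} with hDdef
    have hne : D.Nonempty := hD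
    have wf : WellFounded ((· < ·) : Ordinal → Ordinal → Prop) := wellFounded_lt
    set δ0 := wf.min D hne with hδ0
    have hmem : δ0 ∈ D := wf.min_mem D hne
    have hub : tle s (T δ0) := by
      apply hs.2
      rintro z ⟨j, rfl⟩
      cases hz : x j with
      | F β => simp [tle]
      | zero => simp [tle]
      | T δ =>
        have : δ ∈ D := ⟨j, hz⟩
        simp only [tle]
        by_contra hlt
        exact wf.not_lt_min D this (lt_of_not_ge hlt)
    have hlow : ∀ δ ∈ D, γ < δ := by
      intro δ ⟨j, hj⟩
      have := hs.1 (x j) ⟨j, rfl⟩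
      rw [hj, hsg] at this
      simp only [tle] at this
      exact lt_of_le_of_ne this (fun he => hno j (he ▸ hj))
    rw [hsg] at hub
    simp only [tle] at hub
    exact absurd hub (hlow δ0 hmem).not_ge
  · push_neg at hD
    have hub : tle s zero := by
      apply hs.2
      rintro z ⟨j, rfl⟩
      cases hz : x j with
      | F β => simp [tle]
      | zero => simp [tle]
      | T δ => exact absurd hz (hD δ j)
    rw [hsg] at hub
    simp [tle] at hub


end TV

open TV in
/-- arbitrary joins in the truth domain `V` are α-monotonic:
if `x j ⊑_α y j` for all `j` then `sup x ⊑_α sup y`. -/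
theorem stmt_11 {κ α : Ordinal} (hα : α < κ) {J : Type*} (x y : J → TV)
    (hx : ∀ j, memV κ (x j)) (hy : ∀ j, memV κ (y j))
    (sx sy : TV) (hsx : isSupTV (Set.range x) sx) (hsy : isSupTV (Set.range y) sy)
    (h : ∀ j, tsq α (x j) (y j)) :
    tsq α sx sy := by
  classical
  -- equal functions ⇒ equal sups
  have sup_eq : (∀ j, x j = y j) → sx = sy := by
    intro hxy
    have hxy' : x = y := funext hxy
    subst hxy'
    exact sup_unique hsx hsy
  by_cases hT : ∃ j β, β < α ∧ y j = T β
  · -- a "high T" occurs in range y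
    obtain ⟨j0, β, hβα, hyj0⟩ := hT
    -- T with index < α transfers between x and y
    have hxfromy : ∀ j δ, δ < α → y j = T δ → x j = T δ := by
      intro j δ hδ hj
      have := tsq_low_eq (h j) (Or.inr (show ord (y j) < (α : WithTop Ordinal) by
        rw [hj]; exact WithTop.coe_lt_coe.mpr hδ))
      rw [this, hj]
    have hyfromx : ∀ j δ, δ < α → x j = T δ → y j = T δ := by
      intro j δ hδ hj
      have := tsq_low_eq (h j) (Or.inl (show ord (x j) < (α : WithTop Ordinal) by
        rw [hj]; exact WithTop.coe_lt_coe.mpr hδ))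
      rw [← this, hj]
    have hxj0 : x j0 = T β := hxfromy j0 β hβα hyj0
    -- sx = T γx with γx ≤ β
    have hsxT : ∃ γ, γ ≤ β ∧ sx = T γ := by
      have := hsx.1 (x j0) ⟨j0, rfl⟩
      rw [hxj0] at this
      cases hc : sx with
      | F δ => rw [hc] at this; simp [tle] at this
      | zero => rw [hc] at this; simp [tle] at this
      | T γ => rw [hc] at this; simp only [tle] at this; exact ⟨γ, this, rfl⟩
    have hsyT : ∃ γ, γ ≤ β ∧ sy = T γ := by
      have := hsy.1 (y j0) ⟨j0, rfl⟩
      rw [hyj0] at this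
      cases hc : sy with
      | F δ => rw [hc] at this; simp [tle] at this
      | zero => rw [hc] at this; simp [tle] at this
      | T γ => rw [hc] at this; simp only [tle] at this; exact ⟨γ, this, rfl⟩
    obtain ⟨γx, hγx, hsxe⟩ := hsxT
    obtain ⟨γy, hγy, hsye⟩ := hsyT
    have h1 : tle sy sx := by
      apply hsy.2
      rintro z ⟨j, rfl⟩
      cases hz : y j with
      | F δ => rw [hsxe]; simp [tle]
      | zero => rw [hsxe]; simp [tle]
      | T δ =>
        rw [hsxe]; simp only [tle]
        by_cases hδ : δ < α
        · have := hsx.1 (x j) ⟨j, rfl⟩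
          rw [hxfromy j δ hδ hz, hsxe] at this
          exact this
        · exact le_trans (le_trans hγx hβα.le) (le_of_not_gt hδ)
    have h2 : tle sx sy := by
      apply hsx.2
      rintro z ⟨j, rfl⟩
      cases hz : x j with
      | F δ => rw [hsye]; simp [tle]
      | zero => rw [hsye]; simp [tle]
      | T δ =>
        rw [hsye]; simp only [tle]
        by_cases hδ : δ < α
        · have := hsy.1 (y j) ⟨j, rfl⟩
          rw [hyfromx j δ hδ hz, hsye] at this
          exact this
        · exact le_trans (le_trans hγy hβα.le) (le_of_not_gt hδ)
    rw [tle_antisymm h2 h1]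
    exact tsq_refl α sy
  · push_neg at hT
    -- no high T in range y, hence none in range x
    have hTx : ∀ j δ, δ < α → x j ≠ T δ := by
      intro j δ hδ hj
      exact hT j δ hδ (by
        have := tsq_low_eq (h j) (Or.inl (show ord (x j) < (α : WithTop Ordinal) by
          rw [hj]; exact WithTop.coe_lt_coe.mpr hδ))
        rw [← this, hj])
    by_cases hM : ∃ j, (α : WithTop Ordinal) ≤ ord (y j)
    · obtain ⟨j1, hj1⟩ := hM
      have hxj1 : (α : WithTop Ordinal) ≤ ord (x j1) := by
        rcases h j1 with ⟨he, hlt⟩ | ⟨ha, _⟩ | ⟨_, ha⟩ | ⟨ha, _⟩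
        · exact absurd (he ▸ hlt) hj1.not_gt
        · rw [ha]; simp [ord]
        · exact ha
        · exact ha.le
      -- T α is an upper bound of a range with no high T's
      have hubx : tle sx (T α) := by
        apply hsx.2
        rintro z ⟨j, rfl⟩
        cases hz : x j with
        | F δ => simp [tle]
        | zero => simp [tle]
        | T δ => simp only [tle]; exact le_of_not_gt (fun hc => hTx j δ hc hz)
      have huby : tle sy (T α) := by
        apply hsy.2
        rintro z ⟨j, rfl⟩
        cases hz : y j with
        | F δ => simp [tle]
        | zero => simp [tle]
        | T δ => simp only [tle]; exact le_of_not_gt (fun hc => hT j δ hc hz)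
      -- α ≤ ord sx
      have Hx : (α : WithTop Ordinal) ≤ ord sx := by
        have hle := hsx.1 (x j1) ⟨j1, rfl⟩
        cases hc : sx with
        | F γ =>
          rw [hc] at hle
          cases hz : x j1 with
          | F δ =>
            rw [hz] at hle; simp only [tle] at hle
            rw [hz] at hxj1; simp only [ord] at hxj1
            simp only [ord]
            exact le_trans hxj1 (WithTop.coe_le_coe.mpr hle)
          | zero => rw [hz] at hle; simp [tle] at hle
          | T δ => rw [hz] at hle; simp [tle] at hle
        | zero => simp [ord]
        | T γ =>
          rw [hc] at hubx; simp only [tle] at hubx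
          simp only [ord]; exact WithTop.coe_le_coe.mpr hubx
      have Hy : (α : WithTop Ordinal) ≤ ord sy := by
        have hle := hsy.1 (y j1) ⟨j1, rfl⟩
        cases hc : sy with
        | F γ =>
          rw [hc] at hle
          cases hz : y j1 with
          | F δ =>
            rw [hz] at hle; simp only [tle] at hle
            rw [hz] at hj1; simp only [ord] at hj1
            simp only [ord]
            exact le_trans hj1 (WithTop.coe_le_coe.mpr hle)
          | zero => rw [hz] at hle; simp [tle] at hle
          | T δ => rw [hz] at hle; simp [tle] at hle
        | zero => simp [ord]
        | T γ =>
          rw [hc] at huby; simp only [tle] at huby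
          simp only [ord]; exact WithTop.coe_le_coe.mpr huby
      by_cases hyF : sy = F α
      · -- then all y j are F β with β ≤ α and x j = y j
        have hxy : ∀ j, x j = y j := by
          intro j
          have hle := hsy.1 (y j) ⟨j, rfl⟩
          rw [hyF] at hle
          cases hz : y j with
          | zero => rw [hz] at hle; simp [tle] at hle
          | T δ => rw [hz] at hle; simp [tle] at hle
          | F δ =>
            rw [hz] at hle; simp only [tle] at hle
            rcases lt_or_eq_of_le hle with hlt | heq
            · have heq2 := tsq_low_eq (h j) (Or.inr (show ord (y j) < (α : WithTop Ordinal) by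
                rw [hz]; exact WithTop.coe_lt_coe.mpr hlt))
              rw [heq2, hz]
            · subst heq
              rcases h j with ⟨he, _⟩ | ⟨ha, _⟩ | ⟨hb, _⟩ | ⟨_, hb⟩
              · rw [he, hz]
              · exact ha
              · rw [hz] at hb; simp at hb
              · rw [hz] at hb; simp [ord] at hb
        rw [sup_eq hxy]; exact tsq_refl α sy
      · by_cases hxT : sx = T α
        · -- then some x j = T α, so y j = T α, so sy = T α
          obtain ⟨j2, hj2⟩ := sup_T_mem hsx hxT
          have hy2 : y j2 = T α := by
            rcases h j2 with ⟨_, hl⟩ | ⟨ha, _⟩ | ⟨hb, _⟩ | ⟨ha, _⟩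
            · rw [hj2] at hl; simp [ord] at hl
            · rw [hj2] at ha; simp at ha
            · exact hb
            · rw [hj2] at ha; simp [ord] at ha
          have h1 : tle (T α) sy := by
            have := hsy.1 (y j2) ⟨j2, rfl⟩; rwa [hy2] at this
          have hsyTα : sy = T α := tle_antisymm (by
            cases hc : sy with
            | F γ => rw [hc] at h1; simp [tle] at h1
            | zero => rw [hc] at h1; simp [tle] at h1
            | T γ => exact hc ▸ huby) h1
          exact Or.inr (Or.inr (Or.inl ⟨hsyTα, Hx⟩))
        · by_cases hxF : sx = F α
          · exact Or.inr (Or.inl ⟨hxF, Hy⟩)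
          · by_cases hyT : sy = T α
            · exact Or.inr (Or.inr (Or.inl ⟨hyT, Hx⟩))
            · -- both strictly above α
              have hx' : (α : WithTop Ordinal) < ord sx := by
                rcases lt_or_eq_of_le Hx with hlt | heq
                · exact hlt
                · rcases ord_eq_iff.mp heq.symm with hc | hc
                  · exact absurd hc hxF
                  · exact absurd hc hxT
              have hy' : (α : WithTop Ordinal) < ord sy := by
                rcases lt_or_eq_of_le Hy with hlt | heq
                · exact hlt
                · rcases ord_eq_iff.mp heq.symm with hc | hc
                  · exact absurd hc hyF
                  · exact absurd hc hyT
              exact Or.inr (Or.inr (Or.inr ⟨hx', hy'⟩))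
    · push_neg at hM
      have hxy : ∀ j, x j = y j := fun j => tsq_low_eq (h j) (Or.inr (hM j))
      rw [sup_eq hxy]; exact tsq_refl α sy
end

section
/- Let L be a basic model, f : L → L a function that is α-monotonic for all α < κ. Then f has a ⊑-least pre-fixed point, which is also the ⊑-least fixed point of f. (Here x ⊑ y iff x = y or x ⊏_α y for some α, where x ⊏_α y means x ⊑_α y but not x =_α y.) -/
namespace BasicModel
variable {L : Type*} [CompleteLattice L] {κ : Ordinal}

lemma eqAt_refl (B : BasicModel L κ) {α : Ordinal} (hα : α < κ) (x : L) : B.eqAt α x x :=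
  ⟨B.sq_refl hα x, B.sq_refl hα x⟩

lemma eqAt_symm (B : BasicModel L κ) {α : Ordinal} {x y : L} (h : B.eqAt α x y) :
    B.eqAt α y x := ⟨h.2, h.1⟩

lemma eqAt_trans (B : BasicModel L κ) {α : Ordinal} (hα : α < κ) {x y z : L}
    (h1 : B.eqAt α x y) (h2 : B.eqAt α y z) : B.eqAt α x z :=
  ⟨B.sq_trans hα h1.1 h2.1, B.sq_trans hα h2.2 h1.2⟩

lemma sq_down (B : BasicModel L κ) {α β : Ordinal} (hβ : β ≤ α) (hα : α < κ)
    {x y : L} (h : B.sq α x y) : B.sq β x y := by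
  rcases hβ.lt_or_eq with hlt | rfl
  · exact (B.ax1 hlt hα h).1
  · exact h

lemma eqAt_down (B : BasicModel L κ) {α β : Ordinal} (hβ : β ≤ α) (hα : α < κ)
    {x y : L} (h : B.eqAt α x y) : B.eqAt β x y :=
  ⟨B.sq_down hβ hα h.1, B.sq_down hβ hα h.2⟩

lemma lub_empty (B : BasicModel L κ) {α : Ordinal} (hα : α < κ) (z : L) :
    B.sq α (B.lub α ∅) z ∧ B.lub α ∅ ≤ z :=
  B.ax3_least hα z ∅ (by simp) z
    (fun β hβ => ⟨B.sq_refl (hβ.trans hα) z, B.sq_refl (hβ.trans hα) z⟩) (by simp)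

lemma bot_sq (B : BasicModel L κ) {α : Ordinal} (hα : α < κ) (z : L) :
    B.sq α ⊥ z := by
  have h1 := (B.lub_empty hα (⊥ : L)).2
  have h2 := (B.lub_empty hα z).1
  rwa [le_bot_iff.mp h1] at h2

lemma sq_sSup_range (B : BasicModel L κ) {α : Ordinal} (hα : α < κ) {ι : Type*}
    (u v : ι → L) (h : ∀ i, B.sq α (u i) (v i)) :
    B.sq α (sSup (Set.range u)) (sSup (Set.range v)) := by
  have := B.ax4 hα (Set.range (fun i => (u i, v i)))
    (by rintro p ⟨i, rfl⟩; exact h i)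
  simpa [← Set.range_comp, Function.comp_def] using this

lemma sq_sSup_left (B : BasicModel L κ) {α : Ordinal} (hα : α < κ) {A : Set L} {x : L}
    (hA : A.Nonempty) (h : ∀ a ∈ A, B.sq α a x) : B.sq α (sSup A) x := by
  have := hA.to_subtype
  have h2 := B.sq_sSup_range hα (fun a : A => (a : L)) (fun _ => x)
    (fun a => h a a.2)
  simpa [Set.range_const] using h2

lemma sq_sSup_right (B : BasicModel L κ) {α : Ordinal} (hα : α < κ) {A : Set L} {x : L}
    (hA : A.Nonempty) (h : ∀ a ∈ A, B.sq α x a) : B.sq α x (sSup A) := by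
  have := hA.to_subtype
  have h2 := B.sq_sSup_range hα (fun _ => x) (fun a : A => (a : L))
    (fun a => h a a.2)
  simpa [Set.range_const] using h2

lemma restrict_eqAt (B : BasicModel L κ) {α : Ordinal} (hα : α < κ) (x : L) :
    B.eqAt α x (B.lub α {x}) := by
  have hsub : ({x} : Set L) ⊆ {y | ∀ β < α, B.sq β x y ∧ B.sq β y x} := by
    rintro y rfl
    exact fun β hβ => ⟨B.sq_refl (hβ.trans hα) _, B.sq_refl (hβ.trans hα) _⟩
  refine ⟨B.ax3_ub hα x {x} hsub x rfl, ?_⟩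
  exact (B.ax3_least hα x {x} hsub x
    (fun β hβ => ⟨B.sq_refl (hβ.trans hα) x, B.sq_refl (hβ.trans hα) x⟩)
    (by rintro w rfl; exact B.sq_refl hα _)).1

lemma restrict_le (B : BasicModel L κ) {α : Ordinal} (hα : α < κ) {x z : L}
    (hz : ∀ β < α, B.eqAt β x z) (hsq : B.sq α x z) : B.lub α {x} ≤ z := by
  have hsub : ({x} : Set L) ⊆ {y | ∀ β < α, B.sq β x y ∧ B.sq β y x} := by
    rintro y rfl
    exact fun β hβ => ⟨B.sq_refl (hβ.trans hα) _, B.sq_refl (hβ.trans hα) _⟩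
  exact (B.ax3_least hα x {x} hsub z (fun β hβ => (hz β hβ))
    (by rintro w rfl; exact hsq)).2

noncomputable def mseq (B : BasicModel L κ) (f : L → L) : Ordinal → L :=
  fun α => B.lub α {z | (∀ β (_ : β < α), B.eqAt β (mseq B f β) z) ∧
      ∀ x : L, (∀ β (_ : β < α), B.eqAt β (mseq B f β) x) → B.sq α (f x) x → B.sq α z x}
  termination_by α => α

def Cpred (B : BasicModel L κ) (f : L → L) (α : Ordinal) (x : L) : Prop :=
  ∀ β (_ : β < α), B.eqAt β (mseq B f β) x

def Eset (B : BasicModel L κ) (f : L → L) (α : Ordinal) : Set L :=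
  {z | Cpred B f α z ∧ ∀ x : L, Cpred B f α x → B.sq α (f x) x → B.sq α z x}

lemma mseq_eq (B : BasicModel L κ) (f : L → L) (α : Ordinal) :
    mseq B f α = B.lub α (Eset B f α) := by
  rw [mseq]; rfl

noncomputable def cpt (B : BasicModel L κ) (f : L → L) (α : Ordinal) : L :=
  sSup (Set.range (fun i : Set.Iio α => B.lub i.1 {mseq B f i.1}))

lemma cbase (B : BasicModel L κ) (f : L → L) (α : Ordinal) (hκ : α ≤ κ)
    (IH : ∀ γ, γ < α → Cpred B f γ (mseq B f γ)) :
    Cpred B f α (cpt B f α) := by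
  intro β hβ
  have hβκ : β < κ := lt_of_lt_of_le hβ hκ
  have hiκ : ∀ i : Set.Iio α, (i : Ordinal) < κ := fun i => lt_of_lt_of_le i.2 hκ
  have key : ∀ i : Set.Iio α, β ≤ i.1 → B.eqAt β (mseq B f β) (mseq B f i.1) := by
    intro i hle
    rcases hle.lt_or_eq with hlt | heq
    · exact IH i.1 i.2 β hlt
    · rw [← heq]; exact B.eqAt_refl hβκ _
  have rle : ∀ i : Set.Iio α, i.1 < β → B.lub i.1 {mseq B f i.1} ≤ mseq B f β := by
    intro i hlt
    refine B.restrict_le (hiκ i) (fun δ hδ => ?_) ((IH β hβ i.1 hlt).1)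
    exact B.eqAt_trans (lt_of_lt_of_le (hδ.trans (hlt.trans hβ)) hκ)
      (B.eqAt_symm (IH i.1 i.2 δ hδ)) (IH β hβ δ (hδ.trans hlt))
  have risqβ : ∀ i : Set.Iio α, β ≤ i.1 →
      B.sq β (B.lub i.1 {mseq B f i.1}) (mseq B f β) := by
    intro i hle
    have e1 := B.restrict_eqAt (hiκ i) (mseq B f i.1)
    exact B.sq_trans hβκ (B.sq_down hle (hiκ i) e1.2) (key i hle).2
  have mβsqri : ∀ i : Set.Iio α, β ≤ i.1 →
      B.sq β (mseq B f β) (B.lub i.1 {mseq B f i.1}) := by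
    intro i hle
    have e1 := B.restrict_eqAt (hiκ i) (mseq B f i.1)
    exact B.sq_trans hβκ (key i hle).1 (B.sq_down hle (hiκ i) e1.1)
  set u : Set.Iio α → L :=
    fun i => if β ≤ i.1 then mseq B f β else B.lub i.1 {mseq B f i.1} with hu
  have hsup : sSup (Set.range u) = mseq B f β := by
    apply le_antisymm
    · apply sSup_le
      rintro x ⟨i, rfl⟩
      simp only [hu]
      split_ifs with h
      · exact le_rfl
      · exact rle i (not_le.mp h)
    · exact le_sSup ⟨⟨β, hβ⟩, if_pos le_rfl⟩
  constructor
  · -- sq β (mseq β) (cpt α)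
    have H := B.sq_sSup_range hβκ u (fun i : Set.Iio α => B.lub i.1 {mseq B f i.1})
      (by
        intro i
        simp only [hu]
        split_ifs with h
        · exact mβsqri i h
        · exact B.sq_refl hβκ _)
    rwa [hsup] at H
  · -- sq β (cpt α) (mseq β)
    have H := B.sq_sSup_range hβκ (fun i : Set.Iio α => B.lub i.1 {mseq B f i.1}) u
      (by
        intro i
        simp only [hu]
        split_ifs with h
        · exact risqβ i h
        · exact B.sq_refl hβκ _)
    rwa [hsup] at H

end BasicModel

namespace BasicModel
variable {L : Type*} [CompleteLattice L] {κ : Ordinal}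

lemma main_inv (B : BasicModel L κ) (f : L → L)
    (hf : ∀ α < κ, ∀ x y : L, B.sq α x y → B.sq α (f x) (f y)) :
    ∀ α, α < κ → Cpred B f α (mseq B f α) ∧
      B.eqAt α (f (mseq B f α)) (mseq B f α) ∧
      (∀ x : L, Cpred B f α x → B.sq α (f x) x → B.sq α (mseq B f α) x) := by
  intro α
  induction α using Ordinal.induction with
  | h α IH =>
  intro hα
  have IH1 : ∀ γ, γ < α → Cpred B f γ (mseq B f γ) :=
    fun γ hγ => (IH γ hγ (hγ.trans hα)).1
  set c := cpt B f α with hcdef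
  have hc : Cpred B f α c := cbase B f α hα.le IH1
  have hsub : Eset B f α ⊆ {y | ∀ β < α, B.sq β c y ∧ B.sq β y c} := by
    intro z hz β hβ
    exact B.eqAt_trans (hβ.trans hα) (B.eqAt_symm (hc β hβ)) (hz.1 β hβ)
  have hEne : (Eset B f α).Nonempty := by
    by_cases hPre : ∃ x, Cpred B f α x ∧ B.sq α (f x) x
    · obtain ⟨x₀, hx₀C, hx₀⟩ := hPre
      set E' : Set L := {z | ∀ x : L, Cpred B f α x → B.sq α (f x) x → B.sq α z x}
        with hE'
      have hE'ne : E'.Nonempty := ⟨⊥, fun x _ _ => B.bot_sq hα x⟩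
      refine ⟨sSup E', ?_, ?_⟩
      · intro β hβ
        have hβκ : β < κ := hβ.trans hα
        constructor
        · refine B.sq_sSup_right hβκ hE'ne (fun z hz => ?_)
          have h1 := B.ax1 hβ hα (hz x₀ hx₀C hx₀)
          exact B.sq_trans hβκ (B.sq_trans hβκ (hx₀C β hβ).1 h1.2) (B.sq_refl hβκ z)
        · refine B.sq_sSup_left hβκ hE'ne (fun z hz => ?_)
          have h1 := B.ax1 hβ hα (hz x₀ hx₀C hx₀)
          exact B.sq_trans hβκ h1.1 (hx₀C β hβ).2
      · exact fun x hxC hx => B.sq_sSup_left hα hE'ne (fun z hz => hz x hxC hx)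
    · exact ⟨c, hc, fun x hxC hx => absurd ⟨x, hxC, hx⟩ hPre⟩
  obtain ⟨z₀, hz₀⟩ := hEne
  have hm : mseq B f α = B.lub α (Eset B f α) := mseq_eq B f α
  have hub : ∀ z ∈ Eset B f α, B.sq α z (mseq B f α) := by
    rw [hm]; exact B.ax3_ub hα c _ hsub
  have part1 : Cpred B f α (mseq B f α) := by
    intro β hβ
    have hβκ : β < κ := hβ.trans hα
    have h2 := B.ax1 hβ hα (hub z₀ hz₀)
    have h3 := hz₀.1 β hβ
    exact ⟨B.sq_trans hβκ h3.1 h2.1, B.sq_trans hβκ h2.2 h3.2⟩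
  have part3 : ∀ x : L, Cpred B f α x → B.sq α (f x) x → B.sq α (mseq B f α) x := by
    intro x hxC hx
    rw [hm]
    refine (B.ax3_least hα c _ hsub x (fun β hβ => ?_)
      (fun w hw => hw.2 x hxC hx)).1
    exact B.eqAt_trans (hβ.trans hα) (B.eqAt_symm (hc β hβ)) (hxC β hβ)
  have hfC : ∀ y : L, Cpred B f α y → Cpred B f α (f y) := by
    intro y hy β hβ
    have hβκ : β < κ := hβ.trans hα
    have h1 : B.eqAt β (f (mseq B f β)) (f y) :=
      ⟨hf β hβκ _ _ (hy β hβ).1, hf β hβκ _ _ (hy β hβ).2⟩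
    exact B.eqAt_trans hβκ (B.eqAt_symm (IH β hβ hβκ).2.1) h1
  have hfmE : f (mseq B f α) ∈ Eset B f α := by
    refine ⟨hfC _ part1, fun x hxC hx => ?_⟩
    exact B.sq_trans hα (hf α hα _ _ (part3 x hxC hx)) hx
  have g : B.sq α (f (mseq B f α)) (mseq B f α) := hub _ hfmE
  exact ⟨part1, ⟨g, part3 (f (mseq B f α)) (hfC _ part1) (hf α hα _ _ g)⟩, part3⟩

end BasicModel


open BasicModel in
/-- a function on a basic model which is α-monotonic for all `α < κ` has a
`⊑`-least pre-fixed point, which is also its `⊑`-least fixed point. -/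
theorem stmt_12 {L : Type*} [CompleteLattice L] {κ : Ordinal} (B : BasicModel L κ)
    (f : L → L) (hf : ∀ α < κ, ∀ x y : L, B.sq α x y → B.sq α (f x) (f y)) :
    ∃ m : L, B.sqle (f m) m ∧ (∀ x : L, B.sqle (f x) x → B.sqle m x) ∧
      f m = m ∧ ∀ x : L, f x = x → B.sqle m x := by
  classical
  set m := cpt B f κ with hm
  have hmC : Cpred B f κ m := cbase B f κ le_rfl (fun γ hγ => (main_inv B f hf γ hγ).1)
  have hfix : f m = m := by
    apply B.ax2
    intro α hα
    have h1 : B.eqAt α (mseq B f α) m := hmC α hα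
    have h2 : B.eqAt α (f (mseq B f α)) (f m) := ⟨hf α hα _ _ h1.1, hf α hα _ _ h1.2⟩
    have h3 := (main_inv B f hf α hα).2.1
    exact B.eqAt_trans hα (B.eqAt_trans hα (B.eqAt_symm h2) h3) h1
  have hleast : ∀ x : L, B.sqle (f x) x → B.sqle m x := by
    intro x hx
    by_cases hmx : m = x
    · exact Or.inl hmx
    · have hT : ({δ | δ < κ ∧ ¬ B.eqAt δ m x}).Nonempty := by
        by_contra h
        rw [Set.not_nonempty_iff_eq_empty, Set.eq_empty_iff_forall_notMem] at h
        refine hmx (B.ax2 (fun α hα => ?_))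
        by_contra hb
        exact h α ⟨hα, hb⟩
      obtain ⟨δ, hδmem, hδmin⟩ := Ordinal.lt_wf.has_min _ hT
      obtain ⟨hδκ, hδne⟩ := hδmem
      have hagree : ∀ β, β < δ → B.eqAt β m x := by
        intro β hβ
        by_contra hb
        exact hδmin β ⟨hβ.trans hδκ, hb⟩ hβ
      have hxC : Cpred B f δ x := by
        intro β hβ
        exact B.eqAt_trans (hβ.trans hδκ) (hmC β (hβ.trans hδκ)) (hagree β hβ)
      have hxPre : B.sq δ (f x) x := by
        rcases hx with heq | ⟨γ, hγκ, hγsq, hγne⟩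
        · rw [heq]; exact B.sq_refl hδκ x
        · rcases lt_trichotomy γ δ with h1 | rfl | h3
          · exfalso
            have e := hagree γ h1
            have e2 : B.eqAt γ (f m) (f x) := ⟨hf γ hγκ _ _ e.1, hf γ hγκ _ _ e.2⟩
            rw [hfix] at e2
            exact hγne (B.eqAt_trans hγκ (B.eqAt_symm e2) e)
          · exact hγsq
          · exact (B.ax1 h3 hγκ hγsq).1
      have hsq : B.sq δ m x := by
        have h1 := (main_inv B f hf δ hδκ).2.2 x hxC hxPre
        exact B.sq_trans hδκ (hmC δ hδκ).2 h1
      exact Or.inr ⟨δ, hδκ, hsq, hδne⟩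
  exact ⟨m, Or.inl hfix, hleast, hfix, fun x hx => hleast x (Or.inl hx)⟩
end

section
/- Let L be a basic model, α ≤ κ, and (x_β)_{β<α} a sequence with x_β =_β x_γ and x_β ≥ x_γ whenever β < γ < α. Then the meet x = ⋀_{β<α} x_β satisfies x_β =_β x for all β < α. -/
open BasicModel in
/-- if `(x β)_{β<α}` is a sequence in a basic model with `x β =_β x γ` and
`x β ≥ x γ` for `β < γ < α` (where `α ≤ κ`), then the meet `x = ⋀_{β<α} x β` satisfies
`x β =_β x` for all `β < α`. -/
theorem stmt_16 {L : Type*} [CompleteLattice L] {κ : Ordinal} (B : BasicModel L κ)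
    {α : Ordinal} (hα : α ≤ κ) (x : Ordinal → L)
    (heq : ∀ β γ : Ordinal, β < γ → γ < α → B.eqAt β (x β) (x γ))
    (hge : ∀ β γ : Ordinal, β < γ → γ < α → x γ ≤ x β) :
    ∀ β < α, B.eqAt β (x β) (sInf (x '' {β : Ordinal | β < α})) := by

  intro β hβα
  have hβκ : β < κ := lt_of_lt_of_le hβα hα
  -- sup-monotonicity from ax4
  have supmono : ∀ a b c : L, B.sq β a b → B.sq β (a ⊔ c) (b ⊔ c) := by
    intro a b c hab
    have h4 := B.ax4 hβκ {(a, b), (c, c)} (by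
      rintro p hp
      rcases hp with hp | hp
      · rw [hp]; exact hab
      · rw [Set.mem_singleton_iff] at hp; rw [hp]; exact B.sq_refl hβκ c)
    have h1 : Prod.fst '' ({(a, b), (c, c)} : Set (L × L)) = {a, c} := by
      simp [Set.image_insert_eq]
    have h2 : Prod.snd '' ({(a, b), (c, c)} : Set (L × L)) = {b, c} := by
      simp [Set.image_insert_eq]
    rw [h1, h2, sSup_pair, sSup_pair] at h4
    exact h4
  -- key : eqAt β between any two tail elements
  have key : ∀ δ δ', β ≤ δ → β ≤ δ' → δ < α → δ' < α → B.eqAt β (x δ) (x δ') := by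
    intro δ δ' h1 h2 h3 h4
    rcases lt_trichotomy δ δ' with h | h | h
    · have he := heq δ δ' h h4
      rcases lt_or_eq_of_le h1 with h' | h'
      · have hδκ : δ < κ := lt_of_lt_of_le h3 hα
        exact ⟨(B.ax1 h' hδκ he.1).1, (B.ax1 h' hδκ he.2).1⟩
      · rw [h']; exact he
    · rw [h]; exact ⟨B.sq_refl hβκ _, B.sq_refl hβκ _⟩
    · have he := heq δ' δ h h3
      rcases lt_or_eq_of_le h2 with h' | h'
      · have hδκ : δ' < κ := lt_of_lt_of_le h4 hα
        exact ⟨(B.ax1 h' hδκ he.2).1, (B.ax1 h' hδκ he.1).1⟩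
      · rw [h']; exact ⟨he.2, he.1⟩
  set m := sInf (x '' {β : Ordinal | β < α}) with hm
  set T : Set L := x '' {δ : Ordinal | β ≤ δ ∧ δ < α} with hT
  -- T is inside the cone of x β
  have hcone : T ⊆ {y | ∀ β' < β, B.sq β' (x β) y ∧ B.sq β' y (x β)} := by
    rintro y ⟨δ, ⟨h1, h2⟩, rfl⟩ β' hβ'
    have he := key β δ le_rfl h1 hβα h2
    exact ⟨(B.ax1 hβ' hβκ he.1).1, (B.ax1 hβ' hβκ he.2).1⟩
  set u := B.lub β T with hu
  have hβT : x β ∈ T := ⟨β, ⟨le_rfl, hβα⟩, rfl⟩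
  -- sq β (x β) u
  have h1 : B.sq β (x β) u := B.ax3_ub hβκ (x β) T hcone _ hβT
  -- sq β u (x β) and u ≤ x β
  have h2 := B.ax3_least hβκ (x β) T hcone (x β)
    (fun β' hβ' => ⟨B.sq_refl (lt_trans hβ' hβκ) _, B.sq_refl (lt_trans hβ' hβκ) _⟩)
    (by rintro w ⟨δ, ⟨hd1, hd2⟩, rfl⟩; exact (key δ β hd1 le_rfl hd2 hβα).1)
  -- u ≤ x δ for each tail element, hence u ≤ m
  have hum : u ≤ m := by
    have hle : ∀ δ, β ≤ δ → δ < α → u ≤ x δ := by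
      intro δ hd1 hd2
      have hcδ : ∀ β' < β, B.sq β' (x β) (x δ) ∧ B.sq β' (x δ) (x β) := by
        intro β' hβ'
        have he := key β δ le_rfl hd1 hβα hd2
        exact ⟨(B.ax1 hβ' hβκ he.1).1, (B.ax1 hβ' hβκ he.2).1⟩
      exact (B.ax3_least hβκ (x β) T hcone (x δ) hcδ
        (by rintro w ⟨δ', ⟨hd1', hd2'⟩, rfl⟩; exact (key δ' δ hd1' hd1 hd2' hd2).1)).2
    apply le_sInf
    rintro y ⟨γ, hγ, rfl⟩
    rcases le_or_gt β γ with h | h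
    · exact hle γ h hγ
    · exact le_trans (hle β le_rfl hβα) (hge γ β h hβα)
  have hmx : m ≤ x β := sInf_le ⟨β, hβα, rfl⟩
  -- sandwich
  have hs1 : B.sq β (x β) m := by
    have := supmono (x β) u m h1
    rwa [sup_eq_left.mpr hmx, sup_eq_right.mpr hum] at this
  have hs2 : B.sq β m (x β) := by
    have := supmono u (x β) m h2.1
    rwa [sup_eq_right.mpr hum, sup_eq_left.mpr hmx] at this
  exact ⟨hs1, hs2⟩
end
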